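/- At any Nash equilibrium a* of the non-cooperative AP channel selection game, the interference experienced by each AP n satisfies ω^n_{a*_n} + Σ_{i≠n : a*_i = a*_n} P_i/d_{in}^θ ≤ ω̄_n + (Σ_{i≠n} P_i/d_{in}^θ)/|M_n|, where ω̄_n = max_{m∈M_n} ω^n_m. Consequently the throughput of AP n at any Nash equilibrium is at least B log₂(1 + (P_n/d_n^θ)/(ω̄_n + (Σ_{i≠n} P_i/d_{in}^θ)/|M_n|)). -/

import Mathlib

open Finset

theorem stmt8 {I : Type*} [Fintype I] [DecidableEq I] {C : Type*} [DecidableEq C]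
    (M : I → Finset C) (hM : ∀ n, (M n).Nonempty)
    (P d : I → ℝ) (D : I → I → ℝ) (ω : I → C → ℝ) (θ B : ℝ)
    (hP : ∀ i, 0 < P i) (hd : ∀ i, 0 < d i)
    (hD : ∀ i j, i ≠ j → 0 < D i j) (hω : ∀ n c, 0 < ω n c)
    (hθ : 0 < θ) (hB : 0 < B)
    (U : I → (I → C) → ℝ)
    (hU : ∀ n a, U n a = B * Real.logb 2 (1 + (P n / d n ^ θ) /
      (ω n (a n) + ∑ i ∈ Finset.univ.erase n, if a i = a n then P i / D i n ^ θ else 0)))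
    (a : I → C) (ha : ∀ n, a n ∈ M n)
    (hNE : ∀ n, ∀ c ∈ M n, U n (Function.update a n c) ≤ U n a) :
    ∀ n : I,
      (ω n (a n) + ∑ i ∈ Finset.univ.erase n, if a i = a n then P i / D i n ^ θ else 0)
        ≤ (M n).sup' (hM n) (ω n) + (∑ i ∈ Finset.univ.erase n, P i / D i n ^ θ) / (M n).card ∧
      B * Real.logb 2 (1 + (P n / d n ^ θ) /
          ((M n).sup' (hM n) (ω n) + (∑ i ∈ Finset.univ.erase n, P i / D i n ^ θ) / (M n).card))
        ≤ U n a := by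
  intro n
  set f : C → ℝ := fun c => ω n c + ∑ i ∈ Finset.univ.erase n,
      if a i = c then P i / D i n ^ θ else 0 with hf
  have hterm : ∀ i ∈ Finset.univ.erase n, 0 < P i / D i n ^ θ := by
    intro i hi
    exact div_pos (hP i) (Real.rpow_pos_of_pos (hD i n (Finset.ne_of_mem_erase hi)) θ)
  have hsumnn : ∀ c, (0:ℝ) ≤ ∑ i ∈ Finset.univ.erase n,
      if a i = c then P i / D i n ^ θ else 0 := by
    intro c
    refine Finset.sum_nonneg fun i hi => ?_
    split
    · exact (hterm i hi).le
    · exact le_rfl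
  have hfpos : ∀ c, 0 < f c := fun c =>
    add_pos_of_pos_of_nonneg (hω n c) (hsumnn c)
  have hX : 0 < P n / d n ^ θ :=
    div_pos (hP n) (Real.rpow_pos_of_pos (hd n) θ)
  set X := P n / d n ^ θ
  -- U as a function of f
  have hUform : ∀ c, U n (Function.update a n c) = B * Real.logb 2 (1 + X / f c) := by
    intro c
    rw [hU]
    simp only [Function.update_self]
    have hs : ∀ i ∈ Finset.univ.erase n,
        (if Function.update a n c i = c then P i / D i n ^ θ else 0) =
        (if a i = c then P i / D i n ^ θ else 0) := fun i hi => by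
      rw [Function.update_of_ne (Finset.ne_of_mem_erase hi)]
    rw [Finset.sum_congr rfl hs]
  have hUa : U n a = B * Real.logb 2 (1 + X / f (a n)) := by
    have := hUform (a n)
    rwa [Function.update_eq_self] at this
  -- key: f (a n) ≤ f c for c ∈ M n
  have hkey : ∀ c ∈ M n, f (a n) ≤ f c := by
    intro c hc
    have h1 : B * Real.logb 2 (1 + X / f c) ≤ B * Real.logb 2 (1 + X / f (a n)) := by
      rw [← hUform, ← hUa]; exact hNE n c hc
    have h2 : Real.logb 2 (1 + X / f c) ≤ Real.logb 2 (1 + X / f (a n)) :=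
      le_of_mul_le_mul_left h1 hB
    have h3 : 1 + X / f c ≤ 1 + X / f (a n) := by
      have hpos1 : 0 < X / f c := div_pos hX (hfpos c)
      have hpos2 : 0 < X / f (a n) := div_pos hX (hfpos (a n))
      exact (Real.logb_le_logb one_lt_two (by linarith) (by linarith)).mp h2
    have h4 : X / f c ≤ X / f (a n) := by linarith
    rw [div_le_div_iff₀ (hfpos c) (hfpos (a n))] at h4
    exact le_of_mul_le_mul_left (by linarith [h4]) hX
  have hcard : (0:ℝ) < (M n).card := by
    exact_mod_cast Finset.card_pos.mpr (hM n)
  -- averaging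
  have havg : (M n).card • f (a n) ≤ ∑ c ∈ M n, f c :=
    Finset.card_nsmul_le_sum (M n) f (f (a n)) hkey
  have hsplit : ∑ c ∈ M n, f c ≤ (M n).card * (M n).sup' (hM n) (ω n) +
      ∑ i ∈ Finset.univ.erase n, P i / D i n ^ θ := by
    rw [Finset.sum_add_distrib]
    gcongr ?_ + ?_
    · calc ∑ c ∈ M n, ω n c ≤ ∑ _c ∈ M n, (M n).sup' (hM n) (ω n) :=
            Finset.sum_le_sum fun c hc => Finset.le_sup' (ω n) hc
        _ = (M n).card * (M n).sup' (hM n) (ω n) := by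
            rw [Finset.sum_const, nsmul_eq_mul]
    · rw [Finset.sum_comm]
      refine Finset.sum_le_sum fun i hi => ?_
      calc ∑ c ∈ M n, (if a i = c then P i / D i n ^ θ else 0)
          = if a i ∈ M n then P i / D i n ^ θ else 0 := by
            simp [Finset.sum_ite_eq (M n) (a i)]
        _ ≤ P i / D i n ^ θ := by
            split
            · exact le_rfl
            · exact (hterm i hi).le
  have hmain : f (a n) ≤ (M n).sup' (hM n) (ω n) +
      (∑ i ∈ Finset.univ.erase n, P i / D i n ^ θ) / (M n).card := by
    have h5 : ((M n).card : ℝ) * f (a n) ≤ (M n).card * (M n).sup' (hM n) (ω n) +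
        ∑ i ∈ Finset.univ.erase n, P i / D i n ^ θ := by
      calc ((M n).card : ℝ) * f (a n) = (M n).card • f (a n) := by rw [nsmul_eq_mul]
        _ ≤ ∑ c ∈ M n, f c := havg
        _ ≤ _ := hsplit
    calc f (a n) ≤ (((M n).card : ℝ) * (M n).sup' (hM n) (ω n) +
          ∑ i ∈ Finset.univ.erase n, P i / D i n ^ θ) / (M n).card := by
          rw [le_div_iff₀ hcard]; nlinarith [h5]
      _ = _ := by
          rw [add_div, mul_div_cancel_left₀ _ (ne_of_gt hcard)]
  refine ⟨hmain, ?_⟩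
  rw [hUa]
  have hbpos : 0 < (M n).sup' (hM n) (ω n) +
      (∑ i ∈ Finset.univ.erase n, P i / D i n ^ θ) / (M n).card :=
    lt_of_lt_of_le (hfpos (a n)) hmain
  have h6 : X / ((M n).sup' (hM n) (ω n) +
      (∑ i ∈ Finset.univ.erase n, P i / D i n ^ θ) / (M n).card) ≤ X / f (a n) :=
    div_le_div_of_nonneg_left hX.le (hfpos (a n)) hmain
  have h7 : Real.logb 2 (1 + X / ((M n).sup' (hM n) (ω n) +
        (∑ i ∈ Finset.univ.erase n, P i / D i n ^ θ) / (M n).card)) ≤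
      Real.logb 2 (1 + X / f (a n)) :=
    Real.logb_le_logb_of_le one_lt_two
      (by have := div_pos hX hbpos; linarith) (by linarith [h6])
  exact mul_le_mul_of_nonneg_left h7 hB.le
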